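/- Let d ∈ ℕ with d ≥ 2, κ ∈ ℝ \ {0}, β ∈ ℝ \ {0}, and Λ ∈ ℝ. Let X_1, …, X_d : ℝ → ℝ be twice differentiable with X_l(t) > 0 for all t, let φ be differentiable, and let ρ, p : ℝ → ℝ and V : ℝ → ℝ satisfy the Bianchi V Einstein equations (I_0), (I_1), …, (I_d) together with (I_01) for all t ∈ ℝ. Let ν ∈ ℝ \ {0}, set R = (X_1⋯X_d)^ν, let θ > 0 and q ∈ ℝ \ {0}, and let τ satisfy τ'(t) = θ R(t)^q for all t with differentiable inverse f (f(τ(t)) = t). Then: (a) the function t ↦ X_1(t)²⋯X_d(t)² · Σ_{1≤l<k≤d}(H_l(t) − H_k(t))² is constant on ℝ, where H_l = X_l'/X_l; write its value as 2dκD. (b) There exists α_1 ∈ ℝ such that X_1(t) = e^{α_1} R(t)^{1/(νd)} for all t. (c) With Y(s) = R(f(s))^q, φ̃ = φ∘f, Q(s) = (qνdκ/(d−1)) φ̃'(s)², ρ̃ = ρ∘f, and p̃ = p∘f, for every t ∈ ℝ, at s = τ(t) the function Y is twice differentiable and satisfies Y''(s) + Q(s)Y(s) = −2qνdκD/(θ²(d−1)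 Y(s)^{(2+qν)/(qν)}) − qνdβ²/(θ² e^{2α_1} Y(s)^{(2+qνd)/(qνd)}) − qνdκ(ρ̃(s) + p̃(s))/(θ²(d−1) Y(s)). -/

import Mathlib

open Finset

lemma pair_decomp {d : ℕ} (g : Fin d → Fin d → ℝ) :
    (∑ i, ∑ j, g i j)
      = (∑ pr ∈ univ.filter (fun pr : Fin d × Fin d => pr.1 < pr.2), g pr.1 pr.2)
        + (∑ pr ∈ univ.filter (fun pr : Fin d × Fin d => pr.1 < pr.2), g pr.2 pr.1)
        + ∑ l, g l l := by
  have h0 : (∑ i, ∑ j, g i j) = ∑ pr : Fin d × Fin d, g pr.1 pr.2 := by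
    rw [Fintype.sum_prod_type]
  rw [h0, ← Finset.sum_filter_add_sum_filter_not univ (fun pr : Fin d × Fin d => pr.1 < pr.2),
    add_assoc]
  congr 1
  rw [← Finset.sum_filter_add_sum_filter_not (univ.filter (fun pr : Fin d × Fin d => ¬ pr.1 < pr.2))
    (fun pr : Fin d × Fin d => pr.2 < pr.1), Finset.filter_filter, Finset.filter_filter]
  congr 1
  · refine Finset.sum_nbij' (fun pr => Prod.swap pr) (fun pr => Prod.swap pr) ?_ ?_ ?_ ?_ ?_
    · intro a ha
      simp only [mem_filter, mem_univ, true_and, not_lt, Prod.fst_swap, Prod.snd_swap] at ha ⊢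
      exact ha.2
    · intro a ha
      simp only [mem_filter, mem_univ, true_and, not_lt, Prod.fst_swap, Prod.snd_swap] at ha ⊢
      exact ⟨ha.le, ha⟩
    · intro a _; simp
    · intro a _; simp
    · intro a _; simp
  · refine Finset.sum_nbij' (fun pr => pr.1) (fun l => (l, l)) ?_ ?_ ?_ ?_ ?_
    · intro a _; exact mem_univ _
    · intro a _; simp
    · intro a ha
      simp only [mem_filter, mem_univ, true_and, not_lt] at ha
      have h1 : a.1 = a.2 := le_antisymm ha.2 ha.1
      exact Prod.ext rfl h1
    · intro a _; rfl
    · intro a ha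
      simp only [mem_filter, mem_univ, true_and, not_lt] at ha
      have h1 : a.1 = a.2 := le_antisymm ha.2 ha.1
      rw [← h1]

lemma sum_filter_ne_eq {d : ℕ} (b : Fin d → ℝ) (i : Fin d) :
    ∑ l ∈ univ.filter (fun l => l ≠ i), b l = (∑ l, b l) - b i := by
  rw [Finset.filter_ne', Finset.sum_erase_eq_sub (mem_univ i)]

lemma pair_sum_sq {d : ℕ} (a : Fin d → ℝ) :
    ∑ pr ∈ univ.filter (fun pr : Fin d × Fin d => pr.1 < pr.2), a pr.1 * a pr.2
      = ((∑ l, a l) ^ 2 - ∑ l, (a l) ^ 2) / 2 := by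
  have hd := pair_decomp (fun i j => a i * a j)
  have hsym : (∑ pr ∈ univ.filter (fun pr : Fin d × Fin d => pr.1 < pr.2), a pr.2 * a pr.1)
      = ∑ pr ∈ univ.filter (fun pr : Fin d × Fin d => pr.1 < pr.2), a pr.1 * a pr.2 :=
    Finset.sum_congr rfl (fun pr _ => by ring)
  have hsq : (∑ l, a l) ^ 2 = ∑ i, ∑ j, a i * a j := by
    rw [sq, Finset.sum_mul_sum]
  have hdiag : (∑ l, a l * a l) = ∑ l, (a l) ^ 2 :=
    Finset.sum_congr rfl (fun l _ => by ring)
  simp only [hsym, hdiag] at hd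
  rw [hsq, hd]; ring

lemma pair_diff_sq {d : ℕ} (a : Fin d → ℝ) :
    ∑ pr ∈ univ.filter (fun pr : Fin d × Fin d => pr.1 < pr.2), (a pr.1 - a pr.2) ^ 2
      = (d : ℝ) * (∑ l, (a l) ^ 2) - (∑ l, a l) ^ 2 := by
  have hd := pair_decomp (fun i j => (a i - a j) ^ 2)
  have hsym : (∑ pr ∈ univ.filter (fun pr : Fin d × Fin d => pr.1 < pr.2), (a pr.2 - a pr.1) ^ 2)
      = ∑ pr ∈ univ.filter (fun pr : Fin d × Fin d => pr.1 < pr.2), (a pr.1 - a pr.2) ^ 2 :=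
    Finset.sum_congr rfl (fun pr _ => by ring)
  have e1 : ∀ i : Fin d, (∑ j, (a i - a j) ^ 2)
      = (d : ℝ) * a i ^ 2 - 2 * a i * (∑ l, a l) + (∑ l, (a l) ^ 2) := by
    intro i
    have h2 : ∀ j : Fin d, (a i - a j) ^ 2 = a i ^ 2 - 2 * a i * a j + (a j) ^ 2 :=
      fun j => by ring
    simp_rw [h2]
    rw [Finset.sum_add_distrib, Finset.sum_sub_distrib, Finset.sum_const, ← Finset.mul_sum]
    simp [Finset.card_univ]
    try ring
  have e2 : (∑ i, ∑ j, (a i - a j) ^ 2)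
      = 2 * ((d : ℝ) * (∑ l, (a l) ^ 2) - (∑ l, a l) ^ 2) := by
    simp_rw [e1]
    rw [Finset.sum_add_distrib, Finset.sum_sub_distrib, Finset.sum_const, Finset.card_univ,
      Fintype.card_fin, nsmul_eq_mul, ← Finset.mul_sum]
    have h3 : (∑ i, 2 * a i * (∑ l, a l)) = 2 * (∑ l, a l) ^ 2 := by
      rw [← Finset.sum_mul, ← Finset.mul_sum]; ring
    rw [h3]; ring
  simp only [hsym, sub_self, ne_eq, OfNat.ofNat_ne_zero, not_false_eq_true, zero_pow,
    Finset.sum_const_zero, add_zero] at hd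
  linarith [hd, e2]

lemma pair_avoid {d : ℕ} (a : Fin d → ℝ) (i : Fin d) :
    ∑ pr ∈ univ.filter (fun pr : Fin d × Fin d => pr.1 < pr.2 ∧ pr.1 ≠ i ∧ pr.2 ≠ i),
        a pr.1 * a pr.2
      = (∑ pr ∈ univ.filter (fun pr : Fin d × Fin d => pr.1 < pr.2), a pr.1 * a pr.2)
        - a i * ((∑ l, a l) - a i) := by
  have hff : univ.filter (fun pr : Fin d × Fin d => pr.1 < pr.2 ∧ pr.1 ≠ i ∧ pr.2 ≠ i)
      = (univ.filter (fun pr : Fin d × Fin d => pr.1 < pr.2)).filter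
          (fun pr => pr.1 ≠ i ∧ pr.2 ≠ i) := by
    rw [Finset.filter_filter]
  have hsplit := Finset.sum_filter_add_sum_filter_not
    (univ.filter (fun pr : Fin d × Fin d => pr.1 < pr.2))
    (fun pr => pr.1 ≠ i ∧ pr.2 ≠ i) (fun pr => a pr.1 * a pr.2)
  have hrest : (∑ pr ∈ (univ.filter (fun pr : Fin d × Fin d => pr.1 < pr.2)).filter
      (fun pr => ¬(pr.1 ≠ i ∧ pr.2 ≠ i)), a pr.1 * a pr.2) = a i * ((∑ l, a l) - a i) := by
    have hsplit2 := Finset.sum_filter_add_sum_filter_not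
      ((univ.filter (fun pr : Fin d × Fin d => pr.1 < pr.2)).filter
        (fun pr => ¬(pr.1 ≠ i ∧ pr.2 ≠ i)))
      (fun pr => pr.1 = i) (fun pr => a pr.1 * a pr.2)
    have hA : (∑ pr ∈ ((univ.filter (fun pr : Fin d × Fin d => pr.1 < pr.2)).filter
        (fun pr => ¬(pr.1 ≠ i ∧ pr.2 ≠ i))).filter (fun pr => pr.1 = i), a pr.1 * a pr.2)
        = ∑ j ∈ univ.filter (fun j => i < j), a i * a j := by
      refine Finset.sum_nbij' (fun pr => pr.2) (fun j => (i, j)) ?_ ?_ ?_ ?_ ?_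
      · intro pr hpr
        simp only [Finset.mem_filter, mem_univ, true_and] at hpr ⊢
        rcases hpr with ⟨⟨h1, _⟩, h3⟩
        rw [h3] at h1; exact h1
      · intro j hj
        simp only [Finset.mem_filter, mem_univ, true_and] at hj ⊢
        exact ⟨⟨hj, by simp [hj.ne']⟩, trivial⟩
      · intro pr hpr
        simp only [Finset.mem_filter, mem_univ, true_and] at hpr
        exact Prod.ext hpr.2.symm rfl
      · intro j _; rfl
      · intro pr hpr
        simp only [Finset.mem_filter, mem_univ, true_and] at hpr
        rw [hpr.2]
    have hB : (∑ pr ∈ ((univ.filter (fun pr : Fin d × Fin d => pr.1 < pr.2)).filter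
        (fun pr => ¬(pr.1 ≠ i ∧ pr.2 ≠ i))).filter (fun pr => ¬ pr.1 = i), a pr.1 * a pr.2)
        = ∑ j ∈ univ.filter (fun j => j < i), a i * a j := by
      refine Finset.sum_nbij' (fun pr => pr.1) (fun j => (j, i)) ?_ ?_ ?_ ?_ ?_
      · intro pr hpr
        simp only [Finset.mem_filter, mem_univ, true_and, not_and_or, not_not] at hpr ⊢
        rcases hpr with ⟨⟨h1, h2⟩, h3⟩
        rcases h2 with h2 | h2
        · exact absurd h2 h3
        · rw [h2] at h1; exact h1
      · intro j hj
        simp only [Finset.mem_filter, mem_univ, true_and, not_and_or, not_not] at hj ⊢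
        exact ⟨⟨hj, Or.inr trivial⟩, hj.ne⟩
      · intro pr hpr
        simp only [Finset.mem_filter, mem_univ, true_and, not_and_or, not_not] at hpr
        rcases hpr with ⟨⟨_, h2⟩, h3⟩
        rcases h2 with h2 | h2
        · exact absurd h2 h3
        · exact Prod.ext rfl h2.symm
      · intro j _; rfl
      · intro pr hpr
        simp only [Finset.mem_filter, mem_univ, true_and, not_and_or, not_not] at hpr
        rcases hpr with ⟨⟨_, h2⟩, h3⟩
        rcases h2 with h2 | h2
        · exact absurd h2 h3
        · rw [h2]; ring
    have hcomb : (∑ j ∈ univ.filter (fun j => i < j), a i * a j)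
        + (∑ j ∈ univ.filter (fun j => j < i), a i * a j)
        = ∑ j ∈ univ.filter (fun j => j ≠ i), a i * a j := by
      have h1 : (univ.filter (fun j : Fin d => j ≠ i)).filter (fun j => i < j)
          = univ.filter (fun j : Fin d => i < j) := by
        rw [Finset.filter_filter]
        apply Finset.filter_congr
        intro j _
        constructor
        · exact fun h => h.2
        · exact fun h => ⟨h.ne', h⟩
      have h2 : (univ.filter (fun j : Fin d => j ≠ i)).filter (fun j => ¬ i < j)
          = univ.filter (fun j : Fin d => j < i) := by
        rw [Finset.filter_filter]
        apply Finset.filter_congr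
        intro j _
        constructor
        · exact fun h => lt_of_le_of_ne (not_lt.1 h.2) h.1
        · exact fun h => ⟨h.ne, not_lt.2 h.le⟩
      rw [← h1, ← h2]
      exact Finset.sum_filter_add_sum_filter_not _ _ _
    have hlast : (∑ j ∈ univ.filter (fun j => j ≠ i), a i * a j)
        = a i * ((∑ l, a l) - a i) := by
      rw [← Finset.mul_sum, sum_filter_ne_eq]
    rw [← hsplit2, hA, hB, hcomb, hlast]
  rw [hff]
  linarith [hsplit, hrest]

set_option maxHeartbeats 1000000

/-- Bianchi V Einstein equations imply a generalized EMP equation. -/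
theorem stmt_16
    (d : ℕ) (hd : 2 ≤ d) (κ β Λ : ℝ) (hκ : κ ≠ 0) (hβ : β ≠ 0)
    (X : Fin d → ℝ → ℝ) (φ ρ p V : ℝ → ℝ)
    (hX : ∀ l, Differentiable ℝ (X l)) (hX' : ∀ l, Differentiable ℝ (deriv (X l)))
    (hXpos : ∀ l t, 0 < X l t)
    (hφ : Differentiable ℝ φ)
    (H : Fin d → ℝ → ℝ) (hH : ∀ l t, H l t = deriv (X l) t / X l t)
    (hI0 : ∀ t, (∑ pr ∈ Finset.univ.filter (fun pr : Fin d × Fin d => pr.1 < pr.2),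
          H pr.1 t * H pr.2 t)
          - (d : ℝ) * ((d : ℝ) - 1) * β ^ 2 / (2 * (X ⟨0, by omega⟩ t) ^ 2)
        = κ * ((deriv φ t) ^ 2 / 2 + V (φ t) + ρ t) + Λ)
    (hIi : ∀ i : Fin d, ∀ t,
        (∑ l ∈ Finset.univ.filter (fun l => l ≠ i), (deriv (H l) t + H l t ^ 2))
          + (∑ pr ∈ Finset.univ.filter
              (fun pr : Fin d × Fin d => pr.1 < pr.2 ∧ pr.1 ≠ i ∧ pr.2 ≠ i),
              H pr.1 t * H pr.2 t)
          - ((d : ℝ) - 1) * ((d : ℝ) - 2) * β ^ 2 / (2 * (X ⟨0, by omega⟩ t) ^ 2)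
        = -κ * ((deriv φ t) ^ 2 / 2 - V (φ t) + p t) + Λ)
    (hI01 : ∀ t, β * (∑ l ∈ Finset.univ.filter (fun l : Fin d => l.val ≠ 0), H l t)
        - ((d : ℝ) - 1) * β * H ⟨0, by omega⟩ t = 0)
    (ν : ℝ) (hν : ν ≠ 0)
    (R : ℝ → ℝ) (hR : ∀ t, R t = (∏ l, X l t) ^ ν)
    (θ q : ℝ) (hθ : 0 < θ) (hq : q ≠ 0)
    (τ f : ℝ → ℝ)
    (hτ : ∀ t, deriv τ t = θ * R t ^ q)
    (hf : Differentiable ℝ f) (hfτ : ∀ t, f (τ t) = t)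
    (Y φt Q : ℝ → ℝ)
    (hY : ∀ s, Y s = R (f s) ^ q)
    (hφt : ∀ s, φt s = φ (f s))
    (hQ : ∀ s, Q s = (q * ν * (d : ℝ) * κ / ((d : ℝ) - 1)) * (deriv φt s) ^ 2) :
    (∀ t₁ t₂,
      (∏ l, X l t₁) ^ 2 *
          (∑ pr ∈ Finset.univ.filter (fun pr : Fin d × Fin d => pr.1 < pr.2),
            (H pr.1 t₁ - H pr.2 t₁) ^ 2)
        = (∏ l, X l t₂) ^ 2 *
          (∑ pr ∈ Finset.univ.filter (fun pr : Fin d × Fin d => pr.1 < pr.2),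
            (H pr.1 t₂ - H pr.2 t₂) ^ 2)) ∧
    (∃ α₁ : ℝ, ∀ t, X ⟨0, by omega⟩ t = Real.exp α₁ * R t ^ (1 / (ν * (d : ℝ)))) ∧
    ∀ D α₁ : ℝ,
      (∀ t, (∏ l, X l t) ^ 2 *
          (∑ pr ∈ Finset.univ.filter (fun pr : Fin d × Fin d => pr.1 < pr.2),
            (H pr.1 t - H pr.2 t) ^ 2) = 2 * (d : ℝ) * κ * D) →
      (∀ t, X ⟨0, by omega⟩ t = Real.exp α₁ * R t ^ (1 / (ν * (d : ℝ)))) →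
      ∀ t, DifferentiableAt ℝ Y (τ t) ∧ DifferentiableAt ℝ (deriv Y) (τ t) ∧
        deriv (deriv Y) (τ t) + Q (τ t) * Y (τ t)
          = -(2 * q * ν * (d : ℝ) * κ * D)
              / (θ ^ 2 * ((d : ℝ) - 1) * Y (τ t) ^ ((2 + q * ν) / (q * ν)))
            - q * ν * (d : ℝ) * β ^ 2
              / (θ ^ 2 * Real.exp (2 * α₁) * Y (τ t) ^ ((2 + q * ν * (d : ℝ)) / (q * ν * (d : ℝ))))
            - q * ν * (d : ℝ) * κ * (ρ (f (τ t)) + p (f (τ t)))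
              / (θ ^ 2 * ((d : ℝ) - 1) * Y (τ t)) := by
  have i0 : Fin d := ⟨0, by omega⟩
  set N : ℝ → ℝ := fun t => ∏ l, X l t with hN
  have hNpos : ∀ t, 0 < N t := fun t => Finset.prod_pos (fun l _ => hXpos l t)
  have hHfun : ∀ l, H l = fun t => deriv (X l) t / X l t := fun l => funext (fun t => hH l t)
  have hHdiff : ∀ l, Differentiable ℝ (H l) := by
    intro l
    rw [hHfun l]
    exact (hX' l).div (hX l) (fun t => (hXpos l t).ne')
  set S : ℝ → ℝ := fun t => ∑ l, H l t with hS
  have hSdiff : Differentiable ℝ S :=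
    Differentiable.fun_sum (fun l _ => hHdiff l)
  have hS' : ∀ t, deriv S t = ∑ l, deriv (H l) t := fun t =>
    deriv_fun_sum (fun l _ => (hHdiff l).differentiableAt)
  -- derivative of N
  have hasN : ∀ t, HasDerivAt N (N t * S t) t := by
    intro t
    have hNL : N = fun u => Real.exp (∑ l, Real.log (X l u)) := by
      funext u
      rw [Real.exp_sum]
      exact (Finset.prod_congr rfl (fun l _ => (Real.exp_log (hXpos l u)).symm))
    have hL : HasDerivAt (fun u => ∑ l, Real.log (X l u)) (S t) t := by
      have := HasDerivAt.fun_sum (u := Finset.univ)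
        (fun l (_ : l ∈ Finset.univ) => ((hX l t).hasDerivAt.log (hXpos l t).ne'))
      exact this.congr_deriv (Finset.sum_congr rfl (fun l _ => (hH l t).symm))
    have hE : Real.exp (∑ l, Real.log (X l t)) = N t := by
      rw [Real.exp_sum]
      exact (Finset.prod_congr rfl (fun l _ => (Real.exp_log (hXpos l t))))
    have := hL.exp
    rw [hE, ← hNL] at this
    exact this
  have hd0 : 0 < d := by omega
  have hd2 : (2:ℝ) ≤ (d:ℝ) := by exact_mod_cast hd
  have hdne : (d:ℝ) ≠ 0 := by linarith
  have hdm1 : (d:ℝ) - 1 ≠ 0 := by linarith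
  -- I01 consequence
  have hS0 : ∀ t, S t = (d:ℝ) * H ⟨0, hd0⟩ t := by
    intro t
    have h1 := hI01 t
    have hfe : Finset.univ.filter (fun l : Fin d => l.val ≠ 0)
        = Finset.univ.filter (fun l : Fin d => l ≠ ⟨0, hd0⟩) := by
      apply Finset.filter_congr
      intro l _
      simp [Fin.ext_iff]
    rw [hfe, sum_filter_ne_eq (fun l => H l t) ⟨0, hd0⟩] at h1
    have h3 : β * (((∑ l, H l t) - H ⟨0, hd0⟩ t) - ((d:ℝ)-1) * H ⟨0, hd0⟩ t) = 0 := by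
      linear_combination h1
    have h4 := (mul_eq_zero.1 h3).resolve_left hβ
    show (∑ l, H l t) = (d:ℝ) * H ⟨0, hd0⟩ t
    linear_combination h4
  -- pair equation
  have hpair : ∀ (i j : Fin d) (t : ℝ),
      deriv (H i) t - deriv (H j) t + (H i t - H j t) * S t = 0 := by
    intro i j t
    have hAi := hIi i t
    have hAj := hIi j t
    rw [sum_filter_ne_eq (fun l => deriv (H l) t + H l t ^ 2) i,
        pair_avoid (fun l => H l t) i] at hAi
    rw [sum_filter_ne_eq (fun l => deriv (H l) t + H l t ^ 2) j,
        pair_avoid (fun l => H l t) j] at hAj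
    show deriv (H i) t - deriv (H j) t + (H i t - H j t) * (∑ l, H l t) = 0
    linear_combination hAj - hAi
  -- constancy of N * (H i - H j)
  have hNdiff : Differentiable ℝ N := fun t => (hasN t).differentiableAt
  have hWconst : ∀ (i j : Fin d) (t₁ t₂ : ℝ),
      N t₁ * (H i t₁ - H j t₁) = N t₂ * (H i t₂ - H j t₂) := by
    intro i j t₁ t₂
    have hdiffW : Differentiable ℝ (fun t => N t * (H i t - H j t)) :=
      hNdiff.mul ((hHdiff i).sub (hHdiff j))
    exact is_const_of_deriv_eq_zero hdiffW (fun t => by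
      have h1 : HasDerivAt (fun u => N u * (H i u - H j u))
          (N t * S t * (H i t - H j t) + N t * (deriv (H i) t - deriv (H j) t)) t :=
        (hasN t).mul ((hHdiff i t).hasDerivAt.sub (hHdiff j t).hasDerivAt)
      rw [h1.deriv]
      linear_combination N t * hpair i j t) t₁ t₂
  have part_a : ∀ t₁ t₂ : ℝ,
      N t₁ ^ 2 * (∑ pr ∈ Finset.univ.filter (fun pr : Fin d × Fin d => pr.1 < pr.2),
          (H pr.1 t₁ - H pr.2 t₁) ^ 2)
      = N t₂ ^ 2 * (∑ pr ∈ Finset.univ.filter (fun pr : Fin d × Fin d => pr.1 < pr.2),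
          (H pr.1 t₂ - H pr.2 t₂) ^ 2) := by
    have key : ∀ t : ℝ, N t ^ 2 * (∑ pr ∈ Finset.univ.filter
          (fun pr : Fin d × Fin d => pr.1 < pr.2), (H pr.1 t - H pr.2 t) ^ 2)
        = ∑ pr ∈ Finset.univ.filter (fun pr : Fin d × Fin d => pr.1 < pr.2),
            (N t * (H pr.1 t - H pr.2 t)) ^ 2 := by
      intro t
      rw [Finset.mul_sum]
      exact Finset.sum_congr rfl (fun pr _ => by ring)
    intro t₁ t₂
    rw [key t₁, key t₂]
    exact Finset.sum_congr rfl (fun pr _ => by rw [hWconst pr.1 pr.2 t₁ t₂])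
  -- part (b)
  set g : ℝ → ℝ := fun u => Real.log (X ⟨0, hd0⟩ u) - (1/(d:ℝ)) * Real.log (N u) with hgdef
  have hgd : ∀ t, HasDerivAt g 0 t := by
    intro t
    have hlogX0 : HasDerivAt (fun u => Real.log (X ⟨0, hd0⟩ u)) (H ⟨0, hd0⟩ t) t := by
      have h1 := (hX ⟨0, hd0⟩ t).hasDerivAt.log (hXpos ⟨0, hd0⟩ t).ne'
      rw [hH]
      exact h1
    have hlogN : HasDerivAt (fun u => Real.log (N u)) (S t) t := by
      have h1 := (hasN t).log (hNpos t).ne'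
      have h2 : N t * S t / N t = S t := mul_div_cancel_left₀ (S t) (hNpos t).ne'
      rw [h2] at h1
      exact h1
    have h3 := hlogX0.sub (hlogN.const_mul (1/(d:ℝ)))
    have h4 : H ⟨0, hd0⟩ t - 1/(d:ℝ) * S t = 0 := by
      rw [hS0 t]
      field_simp
      ring
    rw [h4] at h3
    exact h3
  have hgconst : ∀ t, g t = g 0 :=
    fun t => is_const_of_deriv_eq_zero (fun u => (hgd u).differentiableAt)
      (fun u => (hgd u).deriv) t 0
  have part_b : ∀ t, X ⟨0, hd0⟩ t = Real.exp (g 0) * R t ^ (1 / (ν * (d:ℝ))) := by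
    intro t
    have hRt : R t ^ (1/(ν*(d:ℝ))) = N t ^ (1/(d:ℝ)) := by
      rw [hR, ← Real.rpow_mul (hNpos t).le,
        show ν * (1/(ν*(d:ℝ))) = 1/(d:ℝ) by field_simp]
    rw [hRt]
    have h5 : X ⟨0, hd0⟩ t = Real.exp (g t + (1/(d:ℝ)) * Real.log (N t)) := by
      show X ⟨0, hd0⟩ t = Real.exp ((Real.log (X ⟨0, hd0⟩ t) - (1/(d:ℝ)) * Real.log (N t)) + (1/(d:ℝ)) * Real.log (N t))
      rw [sub_add_cancel, Real.exp_log (hXpos _ t)]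
    rw [h5, hgconst t, Real.exp_add]
    congr 1
    rw [Real.rpow_def_of_pos (hNpos t), mul_comm]
  -- the scalar equation from summing the I_i equations
  have hT : ∀ t, ((d:ℝ)-1) * deriv S t + ((d:ℝ)-1) * S t ^ 2
      - 2*(d:ℝ)*(∑ pr ∈ Finset.univ.filter (fun pr : Fin d × Fin d => pr.1 < pr.2),
          H pr.1 t * H pr.2 t)
      + (d:ℝ)*κ*(deriv φ t)^2 + (d:ℝ)*κ*(ρ t + p t)
      + (d:ℝ)*((d:ℝ)-1)*β^2/(X ⟨0, hd0⟩ t)^2 = 0 := by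
    intro t
    have hAi : ∀ i : Fin d,
        ((∑ l, (deriv (H l) t + H l t ^ 2)) - (deriv (H i) t + H i t ^ 2))
        + ((∑ pr ∈ Finset.univ.filter (fun pr : Fin d × Fin d => pr.1 < pr.2),
            H pr.1 t * H pr.2 t) - H i t * (S t - H i t))
        - ((d:ℝ)-1)*((d:ℝ)-2)*β^2/(2*(X ⟨0, hd0⟩ t)^2)
        = -κ * ((deriv φ t)^2/2 - V (φ t) + p t) + Λ := by
      intro i
      have h := hIi i t
      rw [sum_filter_ne_eq (fun l => deriv (H l) t + H l t ^ 2) i,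
          pair_avoid (fun l => H l t) i] at h
      exact h
    have hsum : (∑ i : Fin d,
        (((∑ l, (deriv (H l) t + H l t ^ 2)) - (deriv (H i) t + H i t ^ 2))
        + ((∑ pr ∈ Finset.univ.filter (fun pr : Fin d × Fin d => pr.1 < pr.2),
            H pr.1 t * H pr.2 t) - H i t * (S t - H i t))
        - ((d:ℝ)-1)*((d:ℝ)-2)*β^2/(2*(X ⟨0, hd0⟩ t)^2)))
        = (d:ℝ) * (-κ * ((deriv φ t)^2/2 - V (φ t) + p t) + Λ) := by
      rw [Finset.sum_congr rfl (fun i (_ : i ∈ Finset.univ) => hAi i), Finset.sum_const,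
        Finset.card_univ, Fintype.card_fin, nsmul_eq_mul]
    have e3 : ∀ c : ℝ, (∑ _i : Fin d, c) = (d:ℝ) * c := fun c => by
      rw [Finset.sum_const, Finset.card_univ, Fintype.card_fin, nsmul_eq_mul]
    have hL : (∑ i : Fin d,
        (((∑ l, (deriv (H l) t + H l t ^ 2)) - (deriv (H i) t + H i t ^ 2))
        + ((∑ pr ∈ Finset.univ.filter (fun pr : Fin d × Fin d => pr.1 < pr.2),
            H pr.1 t * H pr.2 t) - H i t * (S t - H i t))
        - ((d:ℝ)-1)*((d:ℝ)-2)*β^2/(2*(X ⟨0, hd0⟩ t)^2)))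
        = (d:ℝ) * ((∑ l, (deriv (H l) t + H l t ^ 2))
            + (∑ pr ∈ Finset.univ.filter (fun pr : Fin d × Fin d => pr.1 < pr.2),
              H pr.1 t * H pr.2 t)
            - ((d:ℝ)-1)*((d:ℝ)-2)*β^2/(2*(X ⟨0, hd0⟩ t)^2))
          - deriv S t - S t ^ 2 := by
      rw [Finset.sum_congr rfl (fun i (_ : i ∈ Finset.univ) => (by ring :
        (((∑ l, (deriv (H l) t + H l t ^ 2)) - (deriv (H i) t + H i t ^ 2))
        + ((∑ pr ∈ Finset.univ.filter (fun pr : Fin d × Fin d => pr.1 < pr.2),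
            H pr.1 t * H pr.2 t) - H i t * (S t - H i t))
        - ((d:ℝ)-1)*((d:ℝ)-2)*β^2/(2*(X ⟨0, hd0⟩ t)^2))
        = ((∑ l, (deriv (H l) t + H l t ^ 2))
            + (∑ pr ∈ Finset.univ.filter (fun pr : Fin d × Fin d => pr.1 < pr.2),
              H pr.1 t * H pr.2 t)
            - ((d:ℝ)-1)*((d:ℝ)-2)*β^2/(2*(X ⟨0, hd0⟩ t)^2))
          - deriv (H i) t - H i t * S t))]
      rw [Finset.sum_sub_distrib, Finset.sum_sub_distrib, e3, ← Finset.sum_mul]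
      have eS : (∑ i, H i t) = S t := rfl
      rw [eS, ← hS' t]
      ring
    have hmain := hL.symm.trans hsum
    have hsplit : (∑ l, (deriv (H l) t + H l t ^ 2)) = deriv S t + ∑ l, H l t ^ 2 := by
      rw [Finset.sum_add_distrib, hS' t]
    have hP2 := pair_sum_sq (fun l => H l t)
    have h0 := hI0 t
    linear_combination hmain - (d:ℝ)*h0 - (d:ℝ)*hsplit - 2*(d:ℝ)*hP2
  -- conclude
  refine ⟨part_a, ⟨g 0, part_b⟩, ?_⟩
  intro D α₁ hD hX0 t
  have hqν : q * ν ≠ 0 := mul_ne_zero hq hν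
  have hνq : ν * q ≠ 0 := mul_ne_zero hν hq
  have hRq : ∀ u, R u ^ q = N u ^ (ν * q) := fun u => by
    rw [hR, ← Real.rpow_mul (hNpos u).le]
  have hYW : Y = fun s => N (f s) ^ (ν*q) := funext fun s => by rw [hY, hRq]
  have hNa_pos : ∀ u, (0:ℝ) < N u ^ (ν*q) := fun u => Real.rpow_pos_of_pos (hNpos u) _
  have hWd : ∀ u, HasDerivAt (fun v => N v ^ (ν*q)) ((ν*q) * N u ^ (ν*q) * S u) u := by
    intro u
    have h1 := (hasN u).rpow_const (p := ν*q) (Or.inl (hNpos u).ne')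
    convert h1 using 1
    rw [Real.rpow_sub_one (hNpos u).ne']
    field_simp [(hNpos u).ne']
  have hτdiff : ∀ u, DifferentiableAt ℝ τ u := by
    intro u
    by_contra hc
    have h1 := deriv_zero_of_not_differentiableAt hc
    rw [hτ u, hRq u] at h1
    have h2 : (0:ℝ) < θ * N u ^ (ν*q) := mul_pos hθ (hNa_pos u)
    rw [h1] at h2
    exact lt_irrefl 0 h2
  have hτ' : ∀ u, HasDerivAt τ (θ * N u ^ (ν*q)) u := fun u => by
    have h1 := (hτdiff u).hasDerivAt
    rw [hτ u, hRq u] at h1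
    exact h1
  have hθNa : ∀ u, θ * N u ^ (ν*q) ≠ 0 := fun u => (mul_pos hθ (hNa_pos u)).ne'
  have hderivf : ∀ u, deriv f (τ u) = 1 / (θ * N u ^ (ν*q)) := by
    intro u
    have hcomp : deriv (f ∘ τ) u = deriv f (τ u) * deriv τ u :=
      deriv_comp (x := u) (hf _) (hτdiff u)
    have hid : (f ∘ τ) = id := funext hfτ
    rw [hid, deriv_id, (hτ' u).deriv] at hcomp
    rw [eq_div_iff (hθNa u)]
    exact hcomp.symm
  have hYdiff : Differentiable ℝ Y := by
    rw [hYW]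
    exact fun s => ((hWd (f s)).differentiableAt).comp s (hf s)
  have hderivY : ∀ u, deriv Y (τ u) = (ν*q/θ) * S u := by
    intro u
    rw [hYW]
    have hc : deriv (fun s => N (f s) ^ (ν*q)) (τ u)
        = ((ν*q) * N (f (τ u)) ^ (ν*q) * S (f (τ u))) * deriv f (τ u) :=
      (HasDerivAt.comp (τ u) (hWd (f (τ u))) ((hf (τ u)).hasDerivAt)).deriv
    rw [hc, hfτ u, hderivf u]
    field_simp [(hNa_pos u).ne', hθ.ne']
  have hmono : StrictMono τ := strictMono_of_deriv_pos (fun u => by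
    rw [hτ u, hRq u]; exact mul_pos hθ (hNa_pos u))
  have hee : deriv Y =ᶠ[nhds (τ t)] (fun s => (ν*q/θ) * S (f s)) := by
    have hmem : Set.Ioo (τ (t-1)) (τ (t+1)) ∈ nhds (τ t) :=
      Ioo_mem_nhds (hmono (by linarith)) (hmono (by linarith))
    filter_upwards [hmem] with s hs
    have hsurj : s ∈ τ '' Set.Ioo (t-1) (t+1) := by
      apply intermediate_value_Ioo (by linarith : t-1 ≤ t+1)
        ((fun u _ => (hτdiff u).continuousAt.continuousWithinAt) :
          ContinuousOn τ (Set.Icc (t-1) (t+1)))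
      exact hs
    obtain ⟨u, _, hu⟩ := hsurj
    rw [← hu, hderivY u, hfτ u]
  have hdY2 : DifferentiableAt ℝ (deriv Y) (τ t) := by
    have h1 : DifferentiableAt ℝ (fun s => (ν*q/θ) * S (f s)) (τ t) :=
      (((hSdiff (f (τ t))).const_mul (ν*q/θ)).comp (τ t) (hf _))
    exact h1.congr_of_eventuallyEq hee
  have hderiv2 : deriv (deriv Y) (τ t) = (ν*q/θ) * deriv S t * (1/(θ * N t ^ (ν*q))) := by
    rw [hee.deriv_eq]
    have hc : deriv (fun s => (ν*q/θ) * S (f s)) (τ t)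
        = ((ν*q/θ) * deriv S (f (τ t))) * deriv f (τ t) :=
      (HasDerivAt.comp (τ t) (((hSdiff (f (τ t))).hasDerivAt.const_mul (ν*q/θ)))
        ((hf (τ t)).hasDerivAt)).deriv
    rw [hc, hfτ t, hderivf t]
  have hφtfun : φt = fun s => φ (f s) := funext hφt
  have hderivφt : deriv φt (τ t) = deriv φ t * (1/(θ * N t ^ (ν*q))) := by
    rw [hφtfun]
    have hc : deriv (fun s => φ (f s)) (τ t) = deriv φ (f (τ t)) * deriv f (τ t) :=
      (HasDerivAt.comp (τ t) ((hφ (f (τ t))).hasDerivAt) ((hf (τ t)).hasDerivAt)).deriv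
    rw [hc, hfτ t, hderivf t]
  have hYτ : Y (τ t) = N t ^ (ν*q) := by rw [hYW]; show N (f (τ t)) ^ (ν*q) = _; rw [hfτ t]
  have hpow1 : (N t ^ (ν*q)) ^ ((2 + q*ν)/(q*ν)) = N t ^ 2 * N t ^ (ν*q) := by
    rw [← Real.rpow_mul (hNpos t).le,
      show (ν*q)*((2 + q*ν)/(q*ν)) = 2 + ν*q by field_simp,
      Real.rpow_add (hNpos t),
      show ((2:ℝ)) = ((2:ℕ):ℝ) by norm_num, Real.rpow_natCast]
  have hpow2 : (N t ^ (ν*q)) ^ ((2 + q*ν*(d:ℝ))/(q*ν*(d:ℝ)))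
      = N t ^ (2/(d:ℝ)) * N t ^ (ν*q) := by
    rw [← Real.rpow_mul (hNpos t).le,
      show (ν*q)*((2 + q*ν*(d:ℝ))/(q*ν*(d:ℝ))) = 2/(d:ℝ) + ν*q by field_simp,
      Real.rpow_add (hNpos t)]
  have hX0sq : Real.exp (2*α₁) * N t ^ (2/(d:ℝ)) = (X ⟨0, hd0⟩ t)^2 := by
    have h1 : X ⟨0, hd0⟩ t = Real.exp α₁ * R t ^ (1 / (ν * (d:ℝ))) := hX0 t
    rw [h1, hR, ← Real.rpow_mul (hNpos t).le,
      show ν * (1/(ν*(d:ℝ))) = 1/(d:ℝ) by field_simp]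
    rw [mul_pow, sq (Real.exp α₁), ← Real.exp_add,
      show α₁ + α₁ = 2*α₁ by ring,
      sq (N t ^ (1/(d:ℝ))), ← Real.rpow_add (hNpos t),
      show 1/(d:ℝ) + 1/(d:ℝ) = 2/(d:ℝ) by ring]
  have hDt := hD t
  have hGs := pair_diff_sq (fun l => H l t)
  have hP2 := pair_sum_sq (fun l => H l t)
  have hTt := hT t
  have h2dκD : 2*(d:ℝ)*κ*D = N t^2 * (((d:ℝ)-1)*S t^2
      - 2*(d:ℝ)*(∑ pr ∈ Finset.univ.filter (fun pr : Fin d × Fin d => pr.1 < pr.2),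
          H pr.1 t * H pr.2 t)) := by
    linear_combination -hDt + (N t^2) * hGs + (2*(d:ℝ)*N t^2) * hP2
  refine ⟨hYdiff _, hdY2, ?_⟩
  rw [hfτ t, hderiv2, hQ, hderivφt, hYτ, hpow1, hpow2,
    show θ^2 * Real.exp (2*α₁) * (N t ^ (2/(d:ℝ)) * N t ^ (ν*q))
      = θ^2 * ((X ⟨0, hd0⟩ t)^2 * N t ^ (ν*q)) from by rw [← hX0sq]; ring]
  have hW0 : (X ⟨0, hd0⟩ t) ≠ 0 := (hXpos _ t).ne'
  field_simp [hθ.ne', (hNa_pos t).ne', (hNpos t).ne', hW0, hdm1] at hTt ⊢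
  linear_combination (N t^2) * hTt
    + ((X ⟨0, hd0⟩ t)^2) * h2dκD
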